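/- Let n ≥ 2 be an integer and let a₁,…,aₙ be positive real numbers with a₁ + ⋯ + aₙ ≤ 1. Then the number of points x = (x₁,…,xₙ) with nonnegative integer coordinates satisfying ∑ᵢ aᵢxᵢ < 1 is strictly greater than nⁿ/n!. (In the paper's notation: σ̄_{n,1} > nⁿ/n! for n ≥ 2.) -/

import Mathlib

open MeasureTheory Set
open scoped ENNReal NNReal

set_option maxHeartbeats 1000000 in
/-- σ̄_{n,1} > nⁿ/n! for n ≥ 2 : if a₁ + ⋯ + aₙ ≤ 1 with all aᵢ > 0 and n ≥ 2,
then the number of lattice points x with ∑ aᵢxᵢ < 1 exceeds nⁿ/n!. -/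
theorem stmt_7 (n : ℕ) (hn : 2 ≤ n) (a : Fin n → ℝ) (ha : ∀ i, 0 < a i)
    (h : ∑ i, a i ≤ 1) :
    (n : ℝ) ^ n / n.factorial <
      (Set.ncard {x : Fin n → ℕ | ∑ i, a i * (x i : ℝ) < 1} : ℝ) := by
  have npos : 0 < n := by omega
  set L : Set (Fin n → ℕ) := {x : Fin n → ℕ | ∑ i, a i * (x i : ℝ) < 1} with hLdef
  -- L is finite
  have hLfin : L.Finite := by
    apply Set.Finite.subset (Set.Finite.pi (fun i : Fin n => Set.finite_Iic (⌈(a i)⁻¹⌉₊)))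
    intro x hx
    simp only [Set.mem_pi, Set.mem_univ, Set.mem_Iic, forall_true_left]
    intro i
    have h1 : a i * (x i : ℝ) < 1 := by
      refine lt_of_le_of_lt ?_ hx
      exact Finset.single_le_sum (fun j _ => mul_nonneg (ha j).le (Nat.cast_nonneg _))
        (Finset.mem_univ i)
    have h2 : (x i : ℝ) ≤ (a i)⁻¹ := by
      rw [inv_eq_one_div, le_div_iff₀ (ha i)]; nlinarith
    have h3 : (x i : ℝ) ≤ (⌈(a i)⁻¹⌉₊ : ℝ) := h2.trans (Nat.le_ceil _)
    exact_mod_cast h3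
  -- 0 ∈ L
  have h0L : (fun _ => 0) ∈ L := by simp [hLdef]
  -- maximal element
  obtain ⟨x', hx'L, hx'max⟩ := Set.exists_max_image L (fun x => ∑ i, a i * (x i : ℝ))
    hLfin ⟨_, h0L⟩
  set s' : ℝ := ∑ i, a i * (x' i : ℝ) with hs'
  have hs'lt : s' < 1 := hx'L
  have hs'nonneg : 0 ≤ s' :=
    Finset.sum_nonneg fun i _ => mul_nonneg (ha i).le (Nat.cast_nonneg _)
  set i0 : Fin n := ⟨0, by omega⟩ with hi0
  set i1 : Fin n := ⟨1, by omega⟩ with hi1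
  have hi01 : i0 ≠ i1 := by simp [hi0, hi1, Fin.ext_iff]
  -- 1 ≤ s' + a i0
  have hkey : 1 ≤ s' + a i0 := by
    by_contra hc
    push_neg at hc
    set x'' : Fin n → ℕ := fun i => if i = i0 then x' i0 + 1 else x' i with hx''
    have hsum : ∑ i, a i * (x'' i : ℝ) = s' + a i0 := by
      have : ∀ i ∈ Finset.univ, a i * (x'' i : ℝ) =
          a i * (x' i : ℝ) + (if i = i0 then a i0 else 0) := by
        intro i _
        by_cases hii : i = i0 <;> simp [hx'', hii] <;> ring
      rw [Finset.sum_congr rfl this, Finset.sum_add_distrib, Finset.sum_ite_eq'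
        Finset.univ i0 (fun _ => a i0)]
      simp [hs']
    have hmem : x'' ∈ L := by
      simp only [hLdef, Set.mem_setOf_eq, hsum]
      exact hc
    have := hx'max x'' hmem
    rw [hsum] at this
    nlinarith [ha i0]
  -- total sum and the extra mass
  set S : ℝ := ∑ i, a i with hS
  have hSpos : 0 < S := Finset.sum_pos (fun i _ => ha i) ⟨i0, Finset.mem_univ _⟩
  have hai0S : a i0 + a i1 ≤ S := by
    have := Finset.sum_le_sum_of_subset_of_nonneg
      (Finset.insert_subset_iff.2 ⟨Finset.mem_univ i0, Finset.singleton_subset_iff.2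
        (Finset.mem_univ i1)⟩) (fun i _ _ => (ha i).le)
    rwa [Finset.sum_insert (by simpa using hi01), Finset.sum_singleton] at this
  set δ : ℝ := a i1 with hδdef
  have hδpos : 0 < δ := ha i1
  set ε : ℝ := min 1 (δ / S) / 2 with hε
  have hεpos : 0 < ε := by
    apply div_pos _ two_pos
    exact lt_min one_pos (div_pos hδpos hSpos)
  have hεle1 : ε ≤ 1 := by
    have : min 1 (δ / S) ≤ 1 := min_le_left _ _
    simp only [hε]; linarith
  have hεS : ε * S ≤ δ / 2 := by
    have h1 : min 1 (δ / S) ≤ δ / S := min_le_right _ _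
    have : ε ≤ δ / S / 2 := by simp only [hε]; linarith
    calc ε * S ≤ (δ / S / 2) * S := by nlinarith
      _ = δ / 2 := by field_simp
  -- sets
  set A : Set (Fin n → ℝ) := {y | ∑ i, a i * |y i| < 1} with hA
  set cube : (Fin n → ℕ) → Set (Fin n → ℝ) := fun x =>
    Set.pi Set.univ (fun i => {t : ℝ | (x i : ℝ) ≤ |t| ∧ |t| < x i + 1}) with hcube
  set B : Set (Fin n → ℝ) :=
    Set.pi Set.univ (fun i => Set.Ioo ((x' i : ℝ) + 1 - ε) ((x' i : ℝ) + 1)) with hB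
  -- cover
  have hcover : A ∪ B ⊆ ⋃ x ∈ L, cube x := by
    rintro y (hy | hy)
    · have hxL : (fun i => ⌊|y i|⌋₊) ∈ L := by
        simp only [hLdef, Set.mem_setOf_eq]
        refine lt_of_le_of_lt ?_ hy
        refine Finset.sum_le_sum fun i _ => ?_
        exact mul_le_mul_of_nonneg_left (Nat.floor_le (abs_nonneg _)) (ha i).le
      have hyc : y ∈ cube (fun i => ⌊|y i|⌋₊) := by
        intro i _
        exact ⟨Nat.floor_le (abs_nonneg _), Nat.lt_floor_add_one _⟩
      exact Set.mem_biUnion hxL hyc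
    · refine Set.mem_biUnion hx'L ?_
      intro i _
      have hyi := hy i (Set.mem_univ i)
      simp only [Set.mem_Ioo] at hyi
      have hpos : (0:ℝ) ≤ (x' i : ℝ) := Nat.cast_nonneg _
      have h1 : (x' i : ℝ) ≤ y i := by linarith [hyi.1]
      have h2 : |y i| = y i := abs_of_nonneg (by linarith)
      exact ⟨by rw [h2]; exact h1, by rw [h2]; exact hyi.2⟩
  -- disjointness
  have hdisj : Disjoint A B := by
    rw [Set.disjoint_left]
    intro y hyA hyB
    have hsum : 1 < ∑ i, a i * |y i| := by
      have hterm : ∀ i ∈ Finset.univ, a i * ((x' i : ℝ) + 1 - ε) < a i * |y i| := by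
        intro i _
        have hyi := hyB i (Set.mem_univ i)
        simp only [Set.mem_Ioo] at hyi
        have hposx : (0:ℝ) ≤ (x' i : ℝ) := Nat.cast_nonneg _
        have h2 : |y i| = y i := abs_of_nonneg (by linarith [hyi.1])
        rw [h2]
        exact mul_lt_mul_of_pos_left hyi.1 (ha i)
      have hlt : ∑ i, a i * ((x' i : ℝ) + 1 - ε) < ∑ i, a i * |y i| :=
        Finset.sum_lt_sum_of_nonempty ⟨i0, Finset.mem_univ _⟩ hterm
      have heq : ∑ i, a i * ((x' i : ℝ) + 1 - ε) = s' + S * (1 - ε) := by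
        simp only [mul_sub, mul_add, mul_one, Finset.sum_sub_distrib, Finset.sum_add_distrib,
          hs', hS, ← Finset.sum_mul]
        ring
      have : 1 ≤ s' + S * (1 - ε) := by nlinarith
      linarith
    exact absurd hyA (by simp only [hA, Set.mem_setOf_eq]; linarith)
  -- volume of B
  have hvolB : volume B = ENNReal.ofReal (ε ^ n) := by
    rw [hB, volume_pi_pi]
    simp only [Real.volume_Ioo]
    have : ∀ i : Fin n, (x' i : ℝ) + 1 - ((x' i : ℝ) + 1 - ε) = ε := fun i => by ring
    simp_rw [this]
    rw [Finset.prod_const, Finset.card_univ, Fintype.card_fin,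
      ← ENNReal.ofReal_pow hεpos.le]
  -- volume of each cube
  have hvolcube : ∀ x : Fin n → ℕ, volume (cube x) ≤ 2 ^ n := by
    intro x
    have hset : ∀ i : Fin n, {t : ℝ | (x i : ℝ) ≤ |t| ∧ |t| < x i + 1} ⊆
        Set.Ioc (-((x i : ℝ) + 1)) (-(x i : ℝ)) ∪ Set.Ico ((x i : ℝ)) ((x i : ℝ) + 1) := by
      intro i t ht
      obtain ⟨h1, h2⟩ := ht
      rcases le_or_gt 0 t with hp | hp
      · right; rw [abs_of_nonneg hp] at h1 h2; exact ⟨h1, h2⟩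
      · left; rw [abs_of_neg hp] at h1 h2; constructor <;> linarith
    rw [hcube]
    calc volume (Set.pi Set.univ fun i => {t : ℝ | (x i : ℝ) ≤ |t| ∧ |t| < x i + 1})
        ≤ volume (Set.pi Set.univ fun i =>
          Set.Ioc (-((x i : ℝ) + 1)) (-(x i : ℝ)) ∪ Set.Ico ((x i : ℝ)) ((x i : ℝ) + 1)) :=
          measure_mono (Set.pi_mono fun i _ => hset i)
      _ = ∏ i : Fin n, volume
          (Set.Ioc (-((x i : ℝ) + 1)) (-(x i : ℝ)) ∪ Set.Ico ((x i : ℝ)) ((x i : ℝ) + 1)) :=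
          volume_pi_pi _
      _ ≤ ∏ _i : Fin n, (2 : ℝ≥0∞) := by
          refine Finset.prod_le_prod' fun i _ => ?_
          refine le_trans (measure_union_le _ _) ?_
          rw [Real.volume_Ioc, Real.volume_Ico]
          have e1 : -(x i : ℝ) - -((x i : ℝ) + 1) = 1 := by ring
          have e2 : (x i : ℝ) + 1 - (x i : ℝ) = 1 := by ring
          rw [e1, e2, ENNReal.ofReal_one]
          norm_num
      _ = 2 ^ n := by rw [Finset.prod_const, Finset.card_univ, Fintype.card_fin]
  -- volume of A
  have hprodpos : 0 < ∏ i, a i := Finset.prod_pos fun i _ => ha i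
  have hvolA : volume A = ENNReal.ofReal ((∏ i, a i)⁻¹ * (2 ^ n / n.factorial)) := by
    set f : (Fin n → ℝ) →ₗ[ℝ] (Fin n → ℝ) := Matrix.toLin' (Matrix.diagonal a) with hf
    have hdet : LinearMap.det f = ∏ i, a i := by
      rw [hf, LinearMap.det_toLin', Matrix.det_diagonal]
    have hdetne : LinearMap.det f ≠ 0 := by rw [hdet]; exact hprodpos.ne'
    have hAeq : A = f ⁻¹' {z : Fin n → ℝ | ∑ i, |z i| ^ (1:ℝ) < 1} := by
      ext y
      simp only [hA, Set.mem_setOf_eq, Set.mem_preimage, hf, Matrix.toLin'_apply,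
        Matrix.mulVec_diagonal, Real.rpow_one]
      constructor
      · intro hy
        refine lt_of_le_of_lt (le_of_eq ?_) hy
        exact Finset.sum_congr rfl fun i _ => by rw [abs_mul, abs_of_pos (ha i)]
      · intro hy
        refine lt_of_le_of_lt (le_of_eq ?_) hy
        exact Finset.sum_congr rfl fun i _ =>
          Eq.symm (by rw [abs_mul, abs_of_pos (ha i)])
    rw [hAeq, MeasureTheory.Measure.addHaar_preimage_linearMap volume hdetne,
      MeasureTheory.volume_sum_rpow_lt_one (Fin n) le_rfl, hdet]
    rw [abs_of_pos (inv_pos.mpr hprodpos), ← ENNReal.ofReal_mul (inv_pos.mpr hprodpos).le]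
    congr 1
    rw [Fintype.card_fin]
    norm_num [Real.Gamma_two, Real.Gamma_nat_eq_factorial]
  -- measure chain
  have hBmeas : MeasurableSet B := MeasurableSet.univ_pi fun i => measurableSet_Ioo
  have hchain : volume A + volume B ≤ (L.ncard : ℝ≥0∞) * 2 ^ n := by
    rw [← measure_union hdisj hBmeas]
    refine le_trans (measure_mono hcover) ?_
    have hUeq : ⋃ x ∈ L, cube x = ⋃ x ∈ hLfin.toFinset, cube x := by
      simp [Set.Finite.mem_toFinset]
    rw [hUeq]
    refine le_trans (measure_biUnion_finset_le _ _) ?_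
    calc ∑ x ∈ hLfin.toFinset, volume (cube x) ≤ ∑ _x ∈ hLfin.toFinset, (2:ℝ≥0∞) ^ n :=
          Finset.sum_le_sum fun x _ => hvolcube x
      _ = (hLfin.toFinset.card : ℝ≥0∞) * 2 ^ n := by
          rw [Finset.sum_const, nsmul_eq_mul]
      _ = (L.ncard : ℝ≥0∞) * 2 ^ n := by
          rw [Set.ncard_eq_toFinset_card L hLfin]
  -- convert to real
  have hreal : (∏ i, a i)⁻¹ * (2 ^ n / n.factorial) + ε ^ n ≤ (L.ncard : ℝ) * 2 ^ n := by
    have h1 : ENNReal.ofReal ((∏ i, a i)⁻¹ * (2 ^ n / n.factorial) + ε ^ n)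
        ≤ ENNReal.ofReal ((L.ncard : ℝ) * 2 ^ n) := by
      rw [ENNReal.ofReal_add (by positivity) (by positivity), ← hvolA, ← hvolB]
      refine le_trans hchain (le_of_eq ?_)
      rw [ENNReal.ofReal_mul (by positivity), ENNReal.ofReal_natCast,
        ENNReal.ofReal_pow (by norm_num : (0:ℝ) ≤ 2), ENNReal.ofReal_ofNat]
    have := (ENNReal.ofReal_le_ofReal_iff (by positivity)).mp h1
    linarith
  -- AM-GM: ∏ a i ≤ (1/n)^n
  have hAMGM : ∏ i, a i ≤ (1 / n : ℝ) ^ n := by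
    have hgm := Real.geom_mean_le_arith_mean_weighted Finset.univ
      (fun _ => (1 / n : ℝ)) a (fun i _ => by positivity)
      (by rw [Finset.sum_const, Finset.card_univ, Fintype.card_fin, nsmul_eq_mul]
          field_simp) (fun i _ => (ha i).le)
    have hsum : ∑ i, (1 / n : ℝ) * a i ≤ 1 / n := by
      rw [← Finset.mul_sum]
      have : (0:ℝ) < 1 / n := by positivity
      nlinarith
    have hgm2 : ∏ i, a i ^ (1 / n : ℝ) ≤ 1 / n := le_trans hgm hsum
    have hpow : (∏ i, a i ^ (1 / n : ℝ)) ^ n ≤ ((1 / n : ℝ)) ^ n :=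
      pow_le_pow_left₀ (Finset.prod_nonneg fun i _ => Real.rpow_nonneg (ha i).le _) hgm2 n
    have hid : (∏ i, a i ^ (1 / n : ℝ)) ^ n = ∏ i, a i := by
      rw [← Finset.prod_pow]
      refine Finset.prod_congr rfl fun i _ => ?_
      rw [← Real.rpow_natCast (a i ^ (1/n : ℝ)) n, ← Real.rpow_mul (ha i).le]
      rw [one_div_mul_cancel (by exact_mod_cast npos.ne' : (n:ℝ) ≠ 0), Real.rpow_one]
    rwa [hid] at hpow
  -- conclude
  have hninv : ((n : ℝ)) ^ n ≤ (∏ i, a i)⁻¹ := by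
    rw [inv_eq_one_div, le_div_iff₀ hprodpos]
    have hmul := mul_le_mul_of_nonneg_left hAMGM
      (pow_nonneg (Nat.cast_nonneg n : (0:ℝ) ≤ n) n)
    have hone : ((n:ℝ)) ^ n * ((1 / n : ℝ)) ^ n = 1 := by
      rw [div_pow, one_pow]
      field_simp
    linarith
  have hfact : (0:ℝ) < n.factorial := by exact_mod_cast n.factorial_pos
  have h2n : (0:ℝ) < 2 ^ n := by positivity
  have hεn : (0:ℝ) < ε ^ n := by positivity
  have key : (n:ℝ) ^ n * (2 ^ n / n.factorial) < (L.ncard : ℝ) * 2 ^ n := by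
    calc (n:ℝ) ^ n * (2 ^ n / n.factorial)
        ≤ (∏ i, a i)⁻¹ * (2 ^ n / n.factorial) := by
          apply mul_le_mul_of_nonneg_right hninv (by positivity)
      _ < (∏ i, a i)⁻¹ * (2 ^ n / n.factorial) + ε ^ n := by linarith
      _ ≤ (L.ncard : ℝ) * 2 ^ n := hreal
  have h' : ((n:ℝ) ^ n / n.factorial) * 2 ^ n < (L.ncard : ℝ) * 2 ^ n := by
    have e : ((n:ℝ) ^ n / n.factorial) * 2 ^ n = (n:ℝ) ^ n * (2 ^ n / n.factorial) := by ring
    rw [e]; exact key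
  exact lt_of_mul_lt_mul_right h' h2n.le
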